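/- Let P be a finite poset with no splitting element, and let M = {t₁ < t₂ < ⋯ < t_m} be a maximal chain of P. Then the index of every in-edge of M is strictly greater than the index of every out-edge of M. That is, if y ≺ t_i with y ∉ M and t_j ≺ z with z ∉ M, then j < i. -/
import Mathlib


open scoped Classical in
/-- The finite set of maximal chains of a finite poset, as finsets. -/
noncomputable def maxChains (α : Type*) [Fintype α] [PartialOrder α] : Finset (Finset α) :=
  Finset.univ.filter (fun s : Finset α => IsMaxChain (· ≤ ·) (s : Set α))

/-- The multiset of cardinalities of the maximal chains of a finite poset. -/
noncomputable def mcMultiset (α : Type*) [Fintype α] [PartialOrder α] : Multiset ℕ :=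
  (maxChains α).val.map Finset.card

/-- `x` is a splitting element: the suborder of elements `≤ x` has more than one
maximal chain and the suborder of elements `≥ x` has more than one maximal chain. -/
def IsSplitting {α : Type*} [PartialOrder α] (x : α) : Prop :=
  (∃ C₁ C₂ : Set (Set.Iic x), IsMaxChain (· ≤ ·) C₁ ∧ IsMaxChain (· ≤ ·) C₂ ∧ C₁ ≠ C₂) ∧
  (∃ C₁ C₂ : Set (Set.Ici x), IsMaxChain (· ≤ ·) C₁ ∧ IsMaxChain (· ≤ ·) C₂ ∧ C₁ ≠ C₂)

lemma maxChain_preimage_Iic {α : Type*} [PartialOrder α] {M : Set α}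
    (hM : IsMaxChain (· ≤ ·) M) {x : α} (hx : x ∈ M) :
    IsMaxChain (· ≤ ·) {a : Set.Iic x | (a : α) ∈ M} := by
  constructor
  · intro a ha b hb hab
    have := hM.1 ha hb (fun h => hab (Subtype.ext h))
    exact this.imp (fun h => h) (fun h => h)
  · intro C' hC' hsub
    refine Set.Subset.antisymm hsub fun a ha => ?_
    have hchain : IsChain (· ≤ ·) (insert (a : α) M) := by
      refine hM.1.insert fun b hb hne => ?_
      rcases eq_or_ne b x with rfl | hbx
      · exact Or.inl a.2
      rcases hM.1 hb hx hbx with hble | hxle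
      · have hbC : (⟨b, hble⟩ : Set.Iic x) ∈ C' := hsub hb
        rcases eq_or_ne a ⟨b, hble⟩ with rfl | hne'
        · exact Or.inl le_rfl
        · exact (hC'.total ha hbC).imp (fun h => h) (fun h => h)
      · exact Or.inl (le_trans a.2 hxle)
    have := hM.2 hchain (Set.subset_insert _ _)
    have : (a : α) ∈ M := this ▸ Set.mem_insert _ _
    exact this

lemma maxChain_preimage_Ici {α : Type*} [PartialOrder α] {M : Set α}
    (hM : IsMaxChain (· ≤ ·) M) {x : α} (hx : x ∈ M) :
    IsMaxChain (· ≤ ·) {a : Set.Ici x | (a : α) ∈ M} := by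
  constructor
  · intro a ha b hb hab
    have := hM.1 ha hb (fun h => hab (Subtype.ext h))
    exact this.imp (fun h => h) (fun h => h)
  · intro C' hC' hsub
    refine Set.Subset.antisymm hsub fun a ha => ?_
    have hchain : IsChain (· ≤ ·) (insert (a : α) M) := by
      refine hM.1.insert fun b hb hne => ?_
      rcases eq_or_ne b x with rfl | hbx
      · exact Or.inr a.2
      rcases hM.1 hb hx hbx with hble | hxle
      · exact Or.inr (le_trans hble a.2)
      · have hbC : (⟨b, hxle⟩ : Set.Ici x) ∈ C' := hsub hb
        rcases eq_or_ne a ⟨b, hxle⟩ with rfl | hne'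
        · exact Or.inl le_rfl
        · exact (hC'.total ha hbC).imp (fun h => h) (fun h => h)
    have := hM.2 hchain (Set.subset_insert _ _)
    have : (a : α) ∈ M := this ▸ Set.mem_insert _ _
    exact this

theorem in_edge_index_gt_out_edge_index {α : Type*} [Fintype α] [PartialOrder α]
    (hsplit : ∀ x : α, ¬ IsSplitting x)
    (m : ℕ) (t : Fin m → α) (ht : StrictMono t)
    (hM : IsMaxChain (· ≤ ·) (Set.range t)) :
    ∀ (i j : Fin m) (y z : α), y ∉ Set.range t → z ∉ Set.range t →
      y ⋖ t i → t j ⋖ z → j < i := by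
  intro i j y z hy hz hyi hjz
  by_contra hij
  push_neg at hij
  apply hsplit (t i)
  have hti : t i ∈ Set.range t := ⟨i, rfl⟩
  constructor
  · have hyle : y ≤ t i := hyi.lt.le
    obtain ⟨C₂, hC₂, hsub⟩ :=
      (Set.subsingleton_singleton (a := (⟨y, hyle⟩ : Set.Iic (t i)))).isChain.exists_maxChain
    refine ⟨_, C₂, maxChain_preimage_Iic hM hti, hC₂, fun heq => ?_⟩
    have : (⟨y, hyle⟩ : Set.Iic (t i)) ∈ C₂ := hsub rfl
    rw [← heq] at this
    exact hy this
  · have hzge : t i ≤ z := le_trans (ht.monotone hij) hjz.lt.le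
    obtain ⟨C₂, hC₂, hsub⟩ :=
      (Set.subsingleton_singleton (a := (⟨z, hzge⟩ : Set.Ici (t i)))).isChain.exists_maxChain
    refine ⟨_, C₂, maxChain_preimage_Ici hM hti, hC₂, fun heq => ?_⟩
    have : (⟨z, hzge⟩ : Set.Ici (t i)) ∈ C₂ := hsub rfl
    rw [← heq] at this
    exact hz this
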